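/- Let f : (0,∞) → ℝ be defined by f(t) = sin(π√t)/(π√t). Then for every integer k ≥ 0 and every real t > 0, the k-th derivative of f satisfies f^{(k)}(t) = (-1)^k · k! · t^{-k} · [ P_k(π²t)·cos(π√t) + Q_k(π²t)·f(t) ], where P_k and Q_k are the polynomials P_k(x) = −Σ_{j=0}^{⌊(k-1)/2⌋} (-4x)^j / (2^{2k-1}·(2j+1)!) · C(2k-2j-1,k) and Q_k(x) = Σ_{j=0}^{⌊k/2⌋} (-4x)^j / (2^{2k}·(2j)!) · C(2k-2j,k), with C(a,b) the binomial coefficient. -/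

import Mathlib

open Finset Real

/-- `f t = sin(π√t)/(π√t)`. -/
noncomputable def f (t : ℝ) : ℝ := Real.sin (π * Real.sqrt t) / (π * Real.sqrt t)

/-- The polynomial `P_k(x) = -∑_{j=0}^{⌊(k-1)/2⌋} (-4x)^j / (2^{2k-1} (2j+1)!) · C(2k-2j-1, k)`,
evaluated at a real `x`.  (The sum has `⌊(k+1)/2⌋` terms; it is empty for `k = 0`.) -/
noncomputable def P (k : ℕ) (x : ℝ) : ℝ :=
  -∑ j ∈ Finset.range ((k + 1) / 2),
    (-4 * x) ^ j / (2 ^ (2 * k - 1) * (Nat.factorial (2 * j + 1)))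
      * (Nat.choose (2 * k - 2 * j - 1) k)

/-- The polynomial `Q_k(x) = ∑_{j=0}^{⌊k/2⌋} (-4x)^j / (2^{2k} (2j)!) · C(2k-2j, k)`,
evaluated at a real `x`. -/
noncomputable def Q (k : ℕ) (x : ℝ) : ℝ :=
  ∑ j ∈ Finset.range (k / 2 + 1),
    (-4 * x) ^ j / (2 ^ (2 * k) * (Nat.factorial (2 * j)))
      * (Nat.choose (2 * k - 2 * j) k)

/-- coefficient of `x^j` in `P k`. -/
noncomputable def pc (k j : ℕ) : ℝ :=
  if 2 * j < k then
    -((-4 : ℝ) ^ j / (2 ^ (2 * k - 1) * (Nat.factorial (2 * j + 1)))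
      * (Nat.choose (2 * k - 2 * j - 1) k))
  else 0

/-- coefficient of `x^j` in `Q k`. -/
noncomputable def qc (k j : ℕ) : ℝ :=
  if 2 * j ≤ k then
    (-4 : ℝ) ^ j / (2 ^ (2 * k) * (Nat.factorial (2 * j)))
      * (Nat.choose (2 * k - 2 * j) k)
  else 0

lemma P_eq (k : ℕ) (x : ℝ) : P k x = ∑ j ∈ Finset.range (k + 1), pc k j * x ^ j := by
  rw [P, neg_eq_iff_eq_neg, ← Finset.sum_neg_distrib]
  rw [← Finset.sum_subset (Finset.range_subset_range.2 (by omega : (k+1)/2 ≤ k+1))]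
  · refine Finset.sum_congr rfl fun j hj => ?_
    simp only [Finset.mem_range] at hj
    rw [pc, if_pos (by omega), mul_pow]
    ring
  · intro j hj hj'
    simp only [Finset.mem_range] at hj hj'
    rw [pc, if_neg (by omega), zero_mul, neg_zero]

lemma Q_eq (k : ℕ) (x : ℝ) : Q k x = ∑ j ∈ Finset.range (k + 1), qc k j * x ^ j := by
  rw [Q]
  rw [← Finset.sum_subset (Finset.range_subset_range.2 (by omega : k/2+1 ≤ k+1))]
  · refine Finset.sum_congr rfl fun j hj => ?_
    simp only [Finset.mem_range] at hj
    rw [qc, if_pos (by omega)]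
    rw [mul_pow, mul_comm ((-4:ℝ)^j) (x^j)]
    ring
  · intro j hj hj'
    simp only [Finset.mem_range] at hj hj'
    rw [qc, if_neg (by omega), zero_mul]
open Finset Real Nat

-- key binomial identity for P recurrence
lemma keyP (j b : ℕ) :
    ((2*j+b+2 : ℕ) : ℝ) * (Nat.choose (2*j+2*b+3) (2*j+b+2))
      = 4*((j+b+1 : ℕ) : ℝ) * (Nat.choose (2*j+2*b+1) (2*j+b+1))
        + (2*(j:ℝ)+1) * (Nat.choose (2*j+2*b+2) (2*j+b+1)) := by
  have h1 := Nat.add_one_mul_choose_eq (2*j+2*b+2) (2*j+b+1)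
  have h2 := Nat.choose_mul_succ_eq (2*j+2*b+1) (2*j+b+1)
  rw [show 2*j+2*b+1+1 - (2*j+b+1) = b+1 from by omega] at h2
  rw [show 2*j+2*b+1+1 = 2*j+2*b+2 from by omega] at h2
  have h1' : ((2*j+2*b+3 : ℕ):ℝ) * (Nat.choose (2*j+2*b+2) (2*j+b+1))
      = (Nat.choose (2*j+2*b+3) (2*j+b+2)) * ((2*j+b+2 : ℕ):ℝ) := by
    exact_mod_cast congrArg (Nat.cast : ℕ → ℝ) h1
  have h2' : ((Nat.choose (2*j+2*b+1) (2*j+b+1)):ℝ) * ((2*j+2*b+2 : ℕ):ℝ)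
      = (Nat.choose (2*j+2*b+2) (2*j+b+1)) * ((b+1 : ℕ):ℝ) := by
    exact_mod_cast congrArg (Nat.cast : ℕ → ℝ) h2
  push_cast at h1' h2' ⊢
  linarith [h1', h2']

-- key binomial identity for Q recurrence (general j case, with 2j ≤ k, k = 2j+b)
lemma keyQ (j b : ℕ) :
    ((2*j+b+1 : ℕ) : ℝ) * (Nat.choose (2*j+2*b+2) (2*j+b+1))
      = (4*((j:ℝ)+b)+2) * (Nat.choose (2*j+2*b) (2*j+b))
        + 2*(j:ℝ) * (Nat.choose (2*j+2*b+1) (2*j+b)) := by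
  have h1 := Nat.add_one_mul_choose_eq (2*j+2*b+1) (2*j+b)
  have h2 := Nat.choose_mul_succ_eq (2*j+2*b) (2*j+b)
  rw [show 2*j+2*b+1 - (2*j+b) = b+1 from by omega] at h2
  have h1' : ((2*j+2*b+2 : ℕ):ℝ) * (Nat.choose (2*j+2*b+1) (2*j+b))
      = (Nat.choose (2*j+2*b+2) (2*j+b+1)) * ((2*j+b+1 : ℕ):ℝ) := by
    exact_mod_cast congrArg (Nat.cast : ℕ → ℝ) h1
  have h2' : ((Nat.choose (2*j+2*b) (2*j+b)):ℝ) * ((2*j+2*b+1 : ℕ):ℝ)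
      = (Nat.choose (2*j+2*b+1) (2*j+b)) * ((b+1 : ℕ):ℝ) := by
    exact_mod_cast congrArg (Nat.cast : ℕ → ℝ) h2
  push_cast at h1' h2' ⊢
  linarith [h1', h2']

lemma pc_rec (k j : ℕ) : ((k:ℝ)+1) * pc (k+1) j = ((k:ℝ) - (j:ℝ)) * pc k j - qc k j / 2 := by
  rcases lt_trichotomy (2*j) k with h | h | h
  · -- main case
    obtain ⟨b, rfl⟩ : ∃ b, k = 2*j+b+1 := ⟨k - 2*j - 1, by omega⟩
    rw [pc, pc, qc, if_pos (by omega), if_pos (by omega), if_pos (by omega)]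
    rw [show 2*(2*j+b+1+1)-1 = 4*j+2*b+3 from by omega,
        show 2*(2*j+b+1+1)-2*j-1 = 2*j+2*b+3 from by omega,
        show 2*(2*j+b+1)-1 = 4*j+2*b+1 from by omega,
        show 2*(2*j+b+1)-2*j-1 = 2*j+2*b+1 from by omega,
        show 2*(2*j+b+1)-2*j = 2*j+2*b+2 from by omega,
        show 2*(2*j+b+1) = 4*j+2*b+2 from by omega,
        show 2*j+b+1+1 = 2*j+b+2 from by omega,
        show (2*j+1).factorial = (2*j+1) * (2*j).factorial from Nat.factorial_succ _]
    have hf : ((2*j).factorial : ℝ) ≠ 0 := by positivity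
    have h4 : ((-4:ℝ))^j ≠ 0 := by positivity
    have key := keyP j b
    push_cast at key ⊢
    field_simp
    linear_combination (-(2:ℝ)^(8*j+4*b+4)) * key
  · -- boundary case 2j = k
    subst h
    rw [pc, pc, qc, if_pos (by omega), if_neg (by omega), if_pos (by omega)]
    rw [show 2*(2*j+1)-1 = 4*j+1 from by omega,
        show 2*(2*j+1)-2*j-1 = 2*j+1 from by omega,
        show 2*(2*j)-2*j = 2*j from by omega,
        show 2*(2*j) = 4*j from by omega,
        Nat.choose_self, Nat.choose_self,
        show (2*j+1).factorial = (2*j+1) * (2*j).factorial from Nat.factorial_succ _]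
    have hf : ((2*j).factorial : ℝ) ≠ 0 := by positivity
    push_cast
    field_simp
    ring
  · -- vanishing case 2j > k
    rw [pc, pc, qc, if_neg (by omega), if_neg (by omega), if_neg (by omega)]
    ring

lemma qc_rec0 (k : ℕ) : ((k:ℝ)+1) * qc (k+1) 0 = ((k:ℝ)+1/2) * qc k 0 := by
  rw [qc, qc, if_pos (by omega), if_pos (by omega)]
  rw [show 2*(k+1)-2*0 = 2*k+2 from by omega,
      show 2*(k+1) = 2*k+2 from by omega,
      show 2*k-2*0 = 2*k from by omega]
  have key := keyQ 0 k
  norm_num at key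
  push_cast
  field_simp
  linear_combination (2*(2:ℝ)^(2*k)) * key

lemma qc_rec (k j : ℕ) :
    ((k:ℝ)+1) * qc (k+1) (j+1) = ((k:ℝ) + 1/2 - ((j:ℝ)+1)) * qc k (j+1) + pc k j / 2 := by
  rcases lt_trichotomy (2*(j+1)) (k+1) with h | h | h
  · obtain ⟨b, rfl⟩ : ∃ b, k = 2*(j+1)+b := ⟨k - 2*j - 2, by omega⟩
    rw [qc, qc, pc, if_pos (by omega), if_pos (by omega), if_pos (by omega)]
    rw [show 2*(2*(j+1)+b+1)-2*(j+1) = 2*j+2*b+4 from by omega,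
        show 2*(2*(j+1)+b+1) = 4*j+2*b+6 from by omega,
        show 2*(2*(j+1)+b)-2*(j+1) = 2*j+2*b+2 from by omega,
        show 2*(2*(j+1)+b)-2*j-1 = 2*j+2*b+3 from by omega,
        show 2*(2*(j+1)+b)-1 = 4*j+2*b+3 from by omega,
        show 2*(2*(j+1)+b) = 4*j+2*b+4 from by omega,
        show 2*(j+1)+b+1 = 2*j+b+3 from by omega,
        show 2*(j+1)+b = 2*j+b+2 from by omega,
        show (2*(j+1)).factorial = (2*j+2) * (2*j+1).factorial from by
          rw [show 2*(j+1) = (2*j+1)+1 from by omega, Nat.factorial_succ]]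
    have key := keyQ (j+1) b
    rw [show 2*(j+1)+2*b+2 = 2*j+2*b+4 from by omega,
        show 2*(j+1)+2*b+1 = 2*j+2*b+3 from by omega,
        show 2*(j+1)+2*b = 2*j+2*b+2 from by omega,
        show 2*(j+1)+b+1 = 2*j+b+3 from by omega,
        show 2*(j+1)+b = 2*j+b+2 from by omega] at key
    have hf : ((2*j+1).factorial : ℝ) ≠ 0 := by positivity
    push_cast at key ⊢
    field_simp
    linear_combination ((2:ℝ)^(8*j+4*b+8)*(-4:ℝ)^(j+1)) * key
  · have hk : k = 2*j+1 := by omega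
    subst hk
    rw [qc, qc, pc, if_pos (by omega), if_neg (by omega), if_pos (by omega)]
    rw [show 2*(2*j+1+1)-2*(j+1) = 2*j+2 from by omega,
        show 2*(2*j+1+1) = 4*j+4 from by omega,
        show 2*(2*j+1)-2*j-1 = 2*j+1 from by omega,
        show 2*(2*j+1)-1 = 4*j+1 from by omega,
        show 2*j+1+1 = 2*j+2 from by omega,
        Nat.choose_self, Nat.choose_self,
        show (2*(j+1)).factorial = (2*j+2) * (2*j+1).factorial from by
          rw [show 2*(j+1) = (2*j+1)+1 from by omega, Nat.factorial_succ]]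
    have hf : ((2*j+1).factorial : ℝ) ≠ 0 := by positivity
    push_cast
    field_simp
    ring
  · rw [qc, qc, pc, if_neg (by omega), if_neg (by omega), if_neg (by omega)]
    ring

noncomputable def dP (k : ℕ) (x : ℝ) : ℝ := ∑ j ∈ Finset.range (k+1), pc k j * ((j:ℝ) * x^(j-1))
noncomputable def dQ (k : ℕ) (x : ℝ) : ℝ := ∑ j ∈ Finset.range (k+1), qc k j * ((j:ℝ) * x^(j-1))

lemma hasDerivAt_P (k : ℕ) (x : ℝ) : HasDerivAt (P k) (dP k x) x := by
  have h : HasDerivAt (fun y => ∑ j ∈ Finset.range (k+1), pc k j * y^j) (dP k x) x :=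
    HasDerivAt.fun_sum fun j _ => (hasDerivAt_pow j x).const_mul (pc k j)
  exact h.congr_of_eventuallyEq (Filter.Eventually.of_forall fun y => P_eq k y)

lemma hasDerivAt_Q (k : ℕ) (x : ℝ) : HasDerivAt (Q k) (dQ k x) x := by
  have h : HasDerivAt (fun y => ∑ j ∈ Finset.range (k+1), qc k j * y^j) (dQ k x) x :=
    HasDerivAt.fun_sum fun j _ => (hasDerivAt_pow j x).const_mul (qc k j)
  exact h.congr_of_eventuallyEq (Filter.Eventually.of_forall fun y => Q_eq k y)

lemma xmul (x : ℝ) (j : ℕ) : x * ((j:ℝ) * x^(j-1)) = (j:ℝ) * x^j := by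
  cases j with
  | zero => simp
  | succ m => push_cast; ring

lemma P_rec (k : ℕ) (x : ℝ) :
    ((k:ℝ)+1) * P (k+1) x = (k:ℝ) * P k x - x * dP k x - Q k x / 2 := by
  have h0 : pc (k+1) (k+1) = 0 := by rw [pc, if_neg (by omega)]
  rw [P_eq, P_eq, Q_eq, dP, Finset.mul_sum, Finset.sum_range_succ, h0, zero_mul, mul_zero,
    add_zero, Finset.mul_sum, Finset.mul_sum, Finset.sum_div, ← Finset.sum_sub_distrib,
    ← Finset.sum_sub_distrib]
  refine Finset.sum_congr rfl fun j hj => ?_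
  have hx := xmul x j
  linear_combination x^j * pc_rec k j + pc k j * hx

lemma qc_rec' (k j : ℕ) :
    ((k:ℝ)+1) * qc (k+1) j
      = ((k:ℝ) + 1/2 - (j:ℝ)) * qc k j + (if j = 0 then 0 else pc k (j-1)) / 2 := by
  cases j with
  | zero => simpa using qc_rec0 k
  | succ m => simpa using qc_rec k m

lemma Q_rec (k : ℕ) (x : ℝ) :
    ((k:ℝ)+1) * Q (k+1) x = ((k:ℝ)+1/2) * Q k x - x * dQ k x + x * P k x / 2 := by
  have hq0 : qc k (k+1) = 0 := by rw [qc, if_neg (by omega)]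
  have hxP : x * P k x = ∑ j ∈ Finset.range (k+2), (if j = 0 then 0 else pc k (j-1)) * x^j := by
    rw [Finset.sum_range_succ', P_eq, Finset.mul_sum]
    simp
    exact Finset.sum_congr rfl fun j _ => by ring
  have hQk : Q k x = ∑ j ∈ Finset.range (k+2), qc k j * x^j := by
    rw [Finset.sum_range_succ, hq0, zero_mul, add_zero, Q_eq]
  have hdQ : x * dQ k x = ∑ j ∈ Finset.range (k+2), ((j:ℝ) * qc k j) * x^j := by
    rw [Finset.sum_range_succ, dQ, Finset.mul_sum]
    rw [hq0]
    simp only [zero_mul, mul_zero, add_zero]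
    exact Finset.sum_congr rfl fun j _ => by rw [← mul_assoc, mul_comm x (qc k j), mul_assoc, xmul]; ring
  rw [Q_eq, show k+1+1 = k+2 from rfl, hxP, hQk, hdQ, Finset.mul_sum, Finset.mul_sum,
    Finset.sum_div, ← Finset.sum_sub_distrib, ← Finset.sum_add_distrib]
  refine Finset.sum_congr rfl fun j hj => ?_
  linear_combination x^j * qc_rec' k j

lemma sqrt_pos' {t : ℝ} (ht : 0 < t) : 0 < Real.sqrt t := Real.sqrt_pos.2 ht

lemma cos_hasDeriv {t : ℝ} (ht : 0 < t) :
    HasDerivAt (fun u => Real.cos (π * Real.sqrt u)) (-(π^2/2) * f t) t := by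
  have hs : 0 < Real.sqrt t := sqrt_pos' ht
  have hss : Real.sqrt t * Real.sqrt t = t := Real.mul_self_sqrt ht.le
  have hπs : HasDerivAt (fun u => π * Real.sqrt u) (π * (1/(2*Real.sqrt t))) t :=
    (Real.hasDerivAt_sqrt ht.ne').const_mul π
  have h := (Real.hasDerivAt_cos (π * Real.sqrt t)).comp t hπs
  refine h.congr_deriv (Eq.symm ?_)
  rw [f]
  obtain ⟨r, hr0, rfl⟩ : ∃ r, 0 < r ∧ t = r * r := ⟨Real.sqrt t, hs, hss.symm⟩
  rw [Real.sqrt_mul_self hr0.le]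
  have hπ : (π : ℝ) ≠ 0 := Real.pi_ne_zero
  have hrne : r ≠ 0 := ne_of_gt hr0
  field_simp

lemma f_hasDeriv {t : ℝ} (ht : 0 < t) :
    HasDerivAt f ((Real.cos (π * Real.sqrt t) - f t) / (2*t)) t := by
  have hs : 0 < Real.sqrt t := sqrt_pos' ht
  have hss : Real.sqrt t * Real.sqrt t = t := Real.mul_self_sqrt ht.le
  have hπs : HasDerivAt (fun u => π * Real.sqrt u) (π * (1/(2*Real.sqrt t))) t :=
    (Real.hasDerivAt_sqrt ht.ne').const_mul π
  have hsin : HasDerivAt (fun u => Real.sin (π * Real.sqrt u))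
      (Real.cos (π * Real.sqrt t) * (π * (1/(2*Real.sqrt t)))) t := by
    have := (Real.hasDerivAt_sin (π * Real.sqrt t)).comp t hπs; exact this
  have hne : π * Real.sqrt t ≠ 0 := by positivity
  have h := hsin.div hπs hne
  have hfe : f = fun u => Real.sin (π * Real.sqrt u) / (π * Real.sqrt u) := rfl
  rw [hfe]
  refine h.congr_deriv (Eq.symm ?_)
  have hπ : (π : ℝ) ≠ 0 := Real.pi_ne_zero
  obtain ⟨r, hr0, rfl⟩ : ∃ r, 0 < r ∧ t = r * r := ⟨Real.sqrt t, hs, hss.symm⟩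
  simp only [Real.sqrt_mul_self hr0.le]
  have hrne : r ≠ 0 := ne_of_gt hr0
  field_simp

noncomputable def g (k : ℕ) (t : ℝ) : ℝ :=
  (-1:ℝ)^k * (Nat.factorial k) * t ^ (-(k:ℤ))
    * (P k (π^2*t) * Real.cos (π * Real.sqrt t) + Q k (π^2*t) * f t)

lemma g_hasDeriv (k : ℕ) {t : ℝ} (ht : 0 < t) : HasDerivAt (g k) (g (k+1) t) t := by
  have hP : HasDerivAt (fun u => P k (π^2*u)) (dP k (π^2*t) * (π^2*1)) t :=
    (hasDerivAt_P k (π^2*t)).comp t ((hasDerivAt_id t).const_mul (π^2))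
  have hQ : HasDerivAt (fun u => Q k (π^2*u)) (dQ k (π^2*t) * (π^2*1)) t :=
    (hasDerivAt_Q k (π^2*t)).comp t ((hasDerivAt_id t).const_mul (π^2))
  have hc := cos_hasDeriv ht
  have hf' := f_hasDeriv ht
  have hz := hasDerivAt_zpow (-(k:ℤ)) t (Or.inl ht.ne')
  have hinner := (hP.mul hc).add (hQ.mul hf')
  have hg := (hz.mul hinner).const_mul ((-1:ℝ)^k * (Nat.factorial k))
  have heq : g k =ᶠ[nhds t] (fun y => (-1:ℝ)^k * (Nat.factorial k) *
      (y ^ (-(k:ℤ)) * (P k (π^2*y) * Real.cos (π * Real.sqrt y) + Q k (π^2*y) * f y))) :=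
    Filter.Eventually.of_forall fun u => by simp only [g]; ring
  have hg2 := hg.congr_of_eventuallyEq heq
  refine hg2.congr_deriv (Eq.symm ?_)
  simp only [Pi.add_apply, Pi.mul_apply]
  have hk1 : ((k:ℝ)+1) ≠ 0 := by positivity
  have htne : t ≠ 0 := ht.ne'
  have hP1 : P (k+1) (π^2*t)
      = ((k:ℝ) * P k (π^2*t) - (π^2*t) * dP k (π^2*t) - Q k (π^2*t)/2)/((k:ℝ)+1) := by
    rw [eq_div_iff hk1]
    linear_combination P_rec k (π^2*t)
  have hQ1 : Q (k+1) (π^2*t)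
      = (((k:ℝ)+1/2) * Q k (π^2*t) - (π^2*t) * dQ k (π^2*t) + (π^2*t) * P k (π^2*t)/2)/((k:ℝ)+1) := by
    rw [eq_div_iff hk1]
    linear_combination Q_rec k (π^2*t)
  have e1 : t ^ (-(k:ℤ)) = (t^k)⁻¹ := by rw [zpow_neg, zpow_natCast]
  have e2 : t ^ (-(k:ℤ)-1) = (t^(k+1))⁻¹ := by
    rw [show (-(k:ℤ)-1) = -((k+1:ℕ):ℤ) from by push_cast; ring, zpow_neg, zpow_natCast]
  rw [g, hP1, hQ1, Nat.factorial_succ, e1, e2]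
  rw [show ((-((k+1:ℕ)):ℤ)) = -((k+1:ℕ):ℤ) from rfl, zpow_neg, zpow_natCast]
  push_cast
  field_simp
  ring

lemma main (k : ℕ) : ∀ t, 0 < t → iteratedDeriv k f t = g k t := by
  induction k with
  | zero =>
    intro t ht
    rw [iteratedDeriv_zero, g]
    have hP0 : P 0 (π^2*t) = 0 := by simp [P]
    have hQ0 : Q 0 (π^2*t) = 1 := by simp [Q]
    rw [hP0, hQ0]
    simp
  | succ k ih =>
    intro t ht
    rw [iteratedDeriv_succ]
    have hev : iteratedDeriv k f =ᶠ[nhds t] g k :=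
      Filter.eventuallyEq_of_mem (isOpen_Ioi.mem_nhds ht) fun u hu => ih u hu
    rw [hev.deriv_eq, (g_hasDeriv k ht).deriv]

theorem iteratedDeriv_f (k : ℕ) (t : ℝ) (ht : 0 < t) :
    iteratedDeriv k f t
      = (-1 : ℝ) ^ k * (Nat.factorial k) * t ^ (-(k : ℤ))
          * (P k (π ^ 2 * t) * Real.cos (π * Real.sqrt t) + Q k (π ^ 2 * t) * f t) := by
  have h := main k t ht
  rwa [g] at h
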